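/- arXiv:2408.07088 — 2 statements merged into one kernel-verified Lean document; each statement's English description precedes it below -/
import Mathlib

section
/- If u is not reachable from v in T (equivalently, the graph contains no closed walk through the target link), then the target-link feature never changes: e^k_{u,r_t,v} = r_{r_t} for every k ≥ 0. -/
/-- `ReachableFrom T v z` means `z = v` or there is a nonempty sequence of triples of `T`,
chained head-to-tail, whose first triple has tail `v` and whose last triple has head `z`. -/
def ReachableFrom {V R : Type*} (T : Finset (V × R × V)) (v z : V) : Prop :=
  z = v ∨ ∃ (l : List (V × R × V)) (hne : l ≠ []),
    (∀ t ∈ l, t ∈ T) ∧ l.Chain' (fun a b => a.2.2 = b.1) ∧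
    (l.head hne).1 = v ∧ (l.getLast hne).2.2 = z

lemma reach_step {V R : Type*} (T : Finset (V × R × V)) (v : V) {x z : V} {y : R}
    (hx : ReachableFrom T v x) (ht : (x, y, z) ∈ T) : ReachableFrom T v z := by
  rcases hx with rfl | ⟨l, hne, hmem, hch, hhead, hlast⟩
  · exact Or.inr ⟨[(x, y, z)], by simp, by simpa using ht, List.isChain_singleton _, rfl, rfl⟩
  · refine Or.inr ⟨l ++ [(x, y, z)], by simp, ?_, ?_, ?_, ?_⟩
    · intro t htl
      rcases List.mem_append.1 htl with h1 | h1
      · exact hmem t h1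
      · simp at h1; subst h1; exact ht
    · refine List.IsChain.append hch (List.isChain_singleton _) ?_
      intro a ha b hb
      rw [List.getLast?_eq_getLast hne] at ha
      simp at ha hb
      subst ha; subst hb
      exact hlast
    · rw [List.head_append_of_ne_nil hne]; exact hhead
    · simp

/-- If `u` is not reachable from `v` in `T` (no closed walk through the target link),
then the target-link feature never changes: `e^k_{u,r_t,v} = r_{r_t}` for every `k ≥ 0`. -/
theorem target_edge_feature_constant_without_closed_walk
    {V R : Type*} [Fintype V] [Fintype R] [DecidableEq V] [DecidableEq R]
    (T : Finset (V × R × V)) (d : ℕ) (hd : 1 ≤ d) (r : R → Fin d → ℝ)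
    (u v : V) (rt : R) (hT : (u, rt, v) ∈ T) (huv : u ≠ v)
    (h : ℕ → V → Fin d → ℝ) (e : ℕ → V × R × V → Fin d → ℝ)
    (hh0 : ∀ z : V, h 0 z = 0)
    (he0 : ∀ t : V × R × V, e 0 t = if t = (u, rt, v) then r rt else 0)
    (hh : ∀ k : ℕ, 1 ≤ k → ∀ z : V,
      h k z = ∑ t ∈ T.filter (fun t => t.2.2 = z), (h (k - 1) t.1 + e (k - 1) t) * r t.2.1)
    (he : ∀ k : ℕ, 1 ≤ k → ∀ t ∈ T, e k t = h k t.1 + e (k - 1) t)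
    (hnr : ¬ ReachableFrom T v u) :
    ∀ k : ℕ, e k (u, rt, v) = r rt := by
  have key : ∀ k : ℕ,
      (∀ z : V, ¬ ReachableFrom T v z → h k z = 0) ∧
      (∀ t ∈ T, ¬ ReachableFrom T v t.1 →
        e k t = if t = (u, rt, v) then r rt else 0) := by
    intro k
    induction k with
    | zero => exact ⟨fun z _ => hh0 z, fun t _ _ => he0 t⟩
    | succ n ih =>
      have hstep : ∀ z : V, ¬ ReachableFrom T v z → h (n + 1) z = 0 := by
        intro z hz
        rw [hh (n + 1) (by omega) z]
        simp only [Nat.add_sub_cancel]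
        apply Finset.sum_eq_zero
        intro t htm
        rw [Finset.mem_filter] at htm
        obtain ⟨htT, htz⟩ := htm
        have hx : ¬ ReachableFrom T v t.1 := by
          intro hx
          exact hz (htz ▸ reach_step T v hx (show (t.1, t.2.1, t.2.2) ∈ T from htT))
        have h1 : h n t.1 = 0 := ih.1 t.1 hx
        have h2 : e n t = 0 := by
          rw [ih.2 t htT hx, if_neg]
          intro hcontr
          apply hz
          rw [← htz, hcontr]
          exact Or.inl rfl
        rw [h1, h2]
        ext i
        simp
      refine ⟨hstep, fun t htT hx => ?_⟩
      rw [he (n + 1) (by omega) t htT, hstep t.1 hx]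
      simp only [Nat.add_sub_cancel]
      rw [ih.2 t htT hx]
      ext i; simp
  intro k
  induction k with
  | zero => rw [he0]; simp
  | succ n ihk =>
    rw [he (n + 1) (by omega) _ hT]
    have := (key (n + 1)).1 u hnr
    simp only [Nat.add_sub_cancel]
    rw [this, ihk]
    ext i; simp
end

section
/- In the general-operator setting with single-source initialization, every non-target edge whose source is not reachable from the head of the target link keeps a zero feature forever: for every k ≥ 0 and every triple (x,y,z) ∈ T with (x,y,z) ≠ (u,r_t,v) such that x is not reachable from v in T, e^k_{x,y,z} = 0. -/
lemma reachable_step {V R : Type*} (T : Finset (V × R × V)) (v : V)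
    (t : V × R × V) (ht : t ∈ T) (hr : ReachableFrom T v t.1) :
    ReachableFrom T v t.2.2 := by
  rcases hr with h1 | ⟨l, hne, hmem, hchain, hhead, hlast⟩
  · exact Or.inr ⟨[t], by simp, by simpa using ht, List.isChain_singleton _, by simpa using h1, by simp⟩
  · refine Or.inr ⟨l ++ [t], by simp, ?_, ?_, ?_, ?_⟩
    · intro s hs
      rcases List.mem_append.mp hs with hs | hs
      · exact hmem s hs
      · simp only [List.mem_singleton] at hs
        exact hs ▸ ht
    · unfold List.Chain'
      rw [List.isChain_append]
      refine ⟨hchain, by simp, ?_⟩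
      intro x hx y hy
      rw [List.getLast?_eq_getLast hne] at hx
      simp only [Option.mem_def, Option.some.injEq] at hx
      simp only [List.head?_cons, Option.mem_def, Option.some.injEq] at hy
      rw [← hx, ← hy] at *
      exact hlast
    · rw [List.head_append_of_ne_nil]
      exact hhead
    · simp

/-- In the general-operator setting with single-source initialization, every non-target
edge whose source is not reachable from the head `v` of the target link keeps a zero
feature forever: for every `k ≥ 0` and every `(x,y,z) ∈ T` with `(x,y,z) ≠ (u,r_t,v)`
such that `x` is not reachable from `v` in `T`, `e^k_{x,y,z} = 0`. -/
theorem edge_feature_zero_off_reachable_set_general_ops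
    {V R : Type*} [Fintype V] [Fintype R] [DecidableEq V] [DecidableEq R]
    (T : Finset (V × R × V)) (d : ℕ) (hd : 1 ≤ d) (r : R → Fin d → ℝ)
    (op otimes : (Fin d → ℝ) → (Fin d → ℝ) → (Fin d → ℝ))
    (hcomm : Std.Commutative op) (hassoc : Std.Associative op)
    (hid : ∀ a : Fin d → ℝ, op 0 a = a)
    (hzero : ∀ a : Fin d → ℝ, otimes 0 a = 0)
    (u v : V) (rt : R) (hT : (u, rt, v) ∈ T) (huv : u ≠ v)
    (h : ℕ → V → Fin d → ℝ) (e : ℕ → V × R × V → Fin d → ℝ)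
    (hh0 : ∀ z : V, h 0 z = 0)
    (he0 : ∀ t : V × R × V, e 0 t = if t = (u, rt, v) then r rt else 0)
    (hh : ∀ k : ℕ, 1 ≤ k → ∀ z : V,
      h k z = @Finset.fold _ _ op hcomm hassoc 0
        (fun t => op (otimes (h (k - 1) t.1) (r t.2.1)) (otimes (e (k - 1) t) (r t.2.1)))
        (T.filter (fun t => t.2.2 = z)))
    (he : ∀ k : ℕ, 1 ≤ k → ∀ t ∈ T, e k t = op (h k t.1) (e (k - 1) t)) :
    ∀ (k : ℕ), ∀ t ∈ T, t ≠ (u, rt, v) → ¬ ReachableFrom T v t.1 → e k t = 0 := by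
  have foldz : ∀ (s : Finset (V × R × V)) (f : V × R × V → Fin d → ℝ),
      (∀ x ∈ s, f x = 0) → @Finset.fold _ _ op hcomm hassoc 0 f s = 0 := by
    intro s f hf
    induction s using Finset.induction_on with
    | empty => simp
    | insert _ _ hx ih =>
      rename_i a s'
      rw [Finset.fold_insert hx, hf a (Finset.mem_insert_self a s'),
        ih (fun x hx => hf x (Finset.mem_insert_of_mem hx))]
      exact hid 0
  -- main simultaneous induction
  have main : ∀ k : ℕ,
      (∀ z : V, ¬ ReachableFrom T v z → h k z = 0) ∧
      (∀ t ∈ T, t ≠ (u, rt, v) → ¬ ReachableFrom T v t.1 → e k t = 0) := by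
    intro k
    induction k with
    | zero =>
      refine ⟨fun z _ => hh0 z, fun t _ hne _ => ?_⟩
      rw [he0 t, if_neg hne]
    | succ n ih =>
      have hh1 : ∀ z : V, ¬ ReachableFrom T v z → h (n + 1) z = 0 := by
        intro z hz
        rw [hh (n + 1) (Nat.le_add_left 1 n) z]
        apply foldz
        intro t ht
        rw [Finset.mem_filter] at ht
        obtain ⟨htT, htz⟩ := ht
        have hx : ¬ ReachableFrom T v t.1 := by
          intro hr
          exact hz (htz ▸ reachable_step T v t htT hr)
        have hne : t ≠ (u, rt, v) := by
          intro hteq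
          apply hz
          rw [← htz, hteq]
          exact Or.inl rfl
        have h1 : h (n + 1 - 1) t.1 = 0 := by simpa using ih.1 t.1 hx
        have h2 : e (n + 1 - 1) t = 0 := by simpa using ih.2 t htT hne hx
        simp only [h1, h2, hzero, hid]
      refine ⟨hh1, fun t htT hne hx => ?_⟩
      rw [he (n + 1) (Nat.le_add_left 1 n) t htT, hh1 t.1 hx, hid]
      simpa using ih.2 t htT hne hx
  exact fun k => (main k).2
end
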